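/- Fix integers d ≥ 1, N ≥ 1, and let A be a complex matrix indexed by (Fin N → Fin d). Suppose that for every vector ψ : Fin d → ℂ one has ⟨ψ^{⊗N}, A ψ^{⊗N}⟩ = 0. Then ⟨ψ₀^{⊗N}, A ψ₁^{⊗N}⟩ = 0 for all vectors ψ₀, ψ₁ : Fin d → ℂ, and consequently ⟨φ, A φ⟩ = 0 for every vector φ in the linear span of { ψ^{⊗N} : ψ : Fin d → ℂ } (the symmetric subspace of (ℂ^d)^{⊗N}). -/

import Mathlib

open BigOperators

noncomputable section

/-- The `N`-th tensor power `ψ^{⊗N}` of a vector `ψ : ℂ^d`. -/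
def tpow (d N : ℕ) (ψ : Fin d → ℂ) : (Fin N → Fin d) → ℂ :=
  fun x => ∏ i, ψ (x i)

/-- The sesquilinear form `⟨u, A v⟩ = ∑_{x,y} conj(u x) A(x,y) v(y)`. -/
def quadF {d N : ℕ} (u : (Fin N → Fin d) → ℂ)
    (A : Matrix (Fin N → Fin d) (Fin N → Fin d) ℂ) (v : (Fin N → Fin d) → ℂ) : ℂ :=
  ∑ x, ∑ y, (starRingEnd ℂ) (u x) * A x y * v y

/-- mixed tensor: `ψ₀` on coordinates in `S`, `ψ₁` on the rest. -/
def uvec {d : ℕ} (N : ℕ) (ψ₀ ψ₁ : Fin d → ℂ) (S : Finset (Fin N)) : (Fin N → Fin d) → ℂ :=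
  fun x => (∏ i ∈ S, ψ₀ (x i)) * ∏ i ∈ Sᶜ, ψ₁ (x i)

lemma quadF_sum_left {d N : ℕ} {ι : Type*} (s : Finset ι)
    (f : ι → (Fin N → Fin d) → ℂ) (A : Matrix (Fin N → Fin d) (Fin N → Fin d) ℂ)
    (v : (Fin N → Fin d) → ℂ) :
    quadF (fun x => ∑ a ∈ s, f a x) A v = ∑ a ∈ s, quadF (f a) A v := by
  simp only [quadF, map_sum, Finset.sum_mul]
  exact (Finset.sum_congr rfl fun x _ => Finset.sum_comm).trans Finset.sum_comm

lemma quadF_sum_right {d N : ℕ} {ι : Type*} (s : Finset ι)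
    (u : (Fin N → Fin d) → ℂ) (A : Matrix (Fin N → Fin d) (Fin N → Fin d) ℂ)
    (f : ι → (Fin N → Fin d) → ℂ) :
    quadF u A (fun y => ∑ a ∈ s, f a y) = ∑ a ∈ s, quadF u A (f a) := by
  simp only [quadF, Finset.mul_sum]
  exact (Finset.sum_congr rfl fun x _ => Finset.sum_comm).trans Finset.sum_comm

lemma quadF_smul_left {d N : ℕ} (c : ℂ) (u : (Fin N → Fin d) → ℂ)
    (A : Matrix (Fin N → Fin d) (Fin N → Fin d) ℂ) (v : (Fin N → Fin d) → ℂ) :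
    quadF (fun x => c * u x) A v = (starRingEnd ℂ) c * quadF u A v := by
  simp only [quadF, map_mul, Finset.mul_sum, mul_assoc]

lemma quadF_smul_right {d N : ℕ} (c : ℂ) (u : (Fin N → Fin d) → ℂ)
    (A : Matrix (Fin N → Fin d) (Fin N → Fin d) ℂ) (v : (Fin N → Fin d) → ℂ) :
    quadF u A (fun y => c * v y) = c * quadF u A v := by
  simp only [quadF, Finset.mul_sum]
  refine Finset.sum_congr rfl fun x _ => Finset.sum_congr rfl fun y _ => by ring

lemma quadF_add_left {d N : ℕ} (u u' : (Fin N → Fin d) → ℂ)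
    (A : Matrix (Fin N → Fin d) (Fin N → Fin d) ℂ) (v : (Fin N → Fin d) → ℂ) :
    quadF (u + u') A v = quadF u A v + quadF u' A v := by
  simp only [quadF, Pi.add_apply, map_add, add_mul, Finset.sum_add_distrib]

lemma quadF_add_right {d N : ℕ} (u : (Fin N → Fin d) → ℂ)
    (A : Matrix (Fin N → Fin d) (Fin N → Fin d) ℂ) (v v' : (Fin N → Fin d) → ℂ) :
    quadF u A (v + v') = quadF u A v + quadF u A v' := by
  simp only [quadF, Pi.add_apply, mul_add, Finset.sum_add_distrib]

lemma quadF_zero_left {d N : ℕ} (A : Matrix (Fin N → Fin d) (Fin N → Fin d) ℂ)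
    (v : (Fin N → Fin d) → ℂ) : quadF 0 A v = 0 := by
  simp [quadF]

lemma quadF_smul_left' {d N : ℕ} (c : ℂ) (u : (Fin N → Fin d) → ℂ)
    (A : Matrix (Fin N → Fin d) (Fin N → Fin d) ℂ) (v : (Fin N → Fin d) → ℂ) :
    quadF (c • u) A v = (starRingEnd ℂ) c * quadF u A v := by
  rw [← quadF_smul_left]; rfl

lemma quadF_smul_right' {d N : ℕ} (c : ℂ) (u : (Fin N → Fin d) → ℂ)
    (A : Matrix (Fin N → Fin d) (Fin N → Fin d) ℂ) (v : (Fin N → Fin d) → ℂ) :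
    quadF u A (c • v) = c * quadF u A v := by
  rw [← quadF_smul_right]; rfl

lemma tpow_add_expand {d : ℕ} (N : ℕ) (ψ₀ ψ₁ : Fin d → ℂ) (t : ℂ) :
    tpow d N (ψ₀ + t • ψ₁) =
      fun x => ∑ S : Finset (Fin N), t ^ Sᶜ.card * uvec N ψ₀ ψ₁ S x := by
  funext x
  simp only [tpow, Pi.add_apply, Pi.smul_apply, smul_eq_mul, uvec]
  rw [Finset.prod_add, Finset.powerset_univ]
  refine Finset.sum_congr rfl fun S _ => ?_
  rw [← Finset.compl_eq_univ_sdiff, Finset.prod_mul_distrib, Finset.prod_const]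
  ring

lemma quadF_tpow_expand {d : ℕ} (N : ℕ) (ψ₀ ψ₁ : Fin d → ℂ)
    (A : Matrix (Fin N → Fin d) (Fin N → Fin d) ℂ) (t : ℂ) :
    quadF (tpow d N (ψ₀ + t • ψ₁)) A (tpow d N (ψ₀ + t • ψ₁)) =
      ∑ S : Finset (Fin N), ∑ T : Finset (Fin N),
        (starRingEnd ℂ) t ^ Sᶜ.card * t ^ Tᶜ.card *
          quadF (uvec N ψ₀ ψ₁ S) A (uvec N ψ₀ ψ₁ T) := by
  rw [tpow_add_expand, quadF_sum_left]
  refine Finset.sum_congr rfl fun S _ => ?_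
  rw [quadF_smul_left, quadF_sum_right, Finset.mul_sum]
  refine Finset.sum_congr rfl fun T _ => ?_
  rw [quadF_smul_right, map_pow]
  ring

set_option maxHeartbeats 1600000 in
theorem stmt13 (d N : ℕ) (hd : 1 ≤ d) (hN : 1 ≤ N)
    (A : Matrix (Fin N → Fin d) (Fin N → Fin d) ℂ)
    (hA : ∀ ψ : Fin d → ℂ, quadF (tpow d N ψ) A (tpow d N ψ) = 0) :
    (∀ ψ₀ ψ₁ : Fin d → ℂ, quadF (tpow d N ψ₀) A (tpow d N ψ₁) = 0) ∧
    (∀ φ : (Fin N → Fin d) → ℂ,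
      φ ∈ Submodule.span ℂ (Set.range (tpow d N)) → quadF φ A φ = 0) := by
  have key : ∀ ψ₀ ψ₁ : Fin d → ℂ, quadF (tpow d N ψ₀) A (tpow d N ψ₁) = 0 := by
    intro ψ₀ ψ₁
    set n : ℕ := 2 * N + 1 with hn
    have hn0 : n ≠ 0 := by omega
    set ω : ℂ := Complex.exp (2 * Real.pi * Complex.I / n) with hω
    have hprim : IsPrimitiveRoot ω n := Complex.isPrimitiveRoot_exp n hn0
    have hω1 : ω ^ n = 1 := hprim.pow_eq_one
    have habs : ‖ω‖ = 1 := Complex.norm_eq_one_of_pow_eq_one hω1 hn0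
    have hconj : (starRingEnd ℂ) ω = ω ^ (2 * N) := by
      have h1 : ω ^ (2 * N) * ω = 1 := by rw [← pow_succ]; exact hω1
      rw [← Complex.inv_eq_conj habs]
      exact (eq_inv_of_mul_eq_one_left h1).symm
    have hconjm : ∀ m : ℕ, (starRingEnd ℂ) (ω ^ m) = ω ^ (2 * N * m) := by
      intro m
      rw [map_pow, hconj, ← pow_mul]
    -- the coefficient C S T
    set C : Finset (Fin N) → Finset (Fin N) → ℂ :=
      fun S T => quadF (uvec N ψ₀ ψ₁ S) A (uvec N ψ₀ ψ₁ T) with hC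
    -- exponent
    set q : Finset (Fin N) → Finset (Fin N) → ℕ :=
      fun S T => (N + 1) + 2 * N * Sᶜ.card + Tᶜ.card with hq
    have main : (0 : ℂ) = ∑ S : Finset (Fin N), ∑ T : Finset (Fin N),
        (∑ m ∈ Finset.range n, ω ^ (m * q S T)) * C S T := by
      have h1 : (0 : ℂ) = ∑ m ∈ Finset.range n, ω ^ (m * (N + 1)) *
          (quadF (tpow d N (ψ₀ + ω ^ m • ψ₁)) A (tpow d N (ψ₀ + ω ^ m • ψ₁))) := by
        simp [hA]
      rw [h1]
      have h2 : ∀ m ∈ Finset.range n, ω ^ (m * (N + 1)) *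
          (quadF (tpow d N (ψ₀ + ω ^ m • ψ₁)) A (tpow d N (ψ₀ + ω ^ m • ψ₁))) =
          ∑ S : Finset (Fin N), ∑ T : Finset (Fin N), ω ^ (m * q S T) * C S T := by
        intro m _
        rw [quadF_tpow_expand, Finset.mul_sum]
        refine Finset.sum_congr rfl fun S _ => ?_
        rw [Finset.mul_sum]
        refine Finset.sum_congr rfl fun T _ => ?_
        rw [hconjm, ← pow_mul, ← pow_mul, ← mul_assoc, ← pow_add, ← pow_add]
        rw [hC, hq]
        congr 2
        ring
      rw [Finset.sum_congr rfl h2]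
      rw [Finset.sum_comm]
      refine Finset.sum_congr rfl fun S _ => ?_
      rw [Finset.sum_comm]
      refine Finset.sum_congr rfl fun T _ => ?_
      rw [Finset.sum_mul]
    -- the inner geometric sums vanish off the diagonal term
    have hzsum : ∀ S T : Finset (Fin N), ¬(S = Finset.univ ∧ T = ∅) →
        ∑ m ∈ Finset.range n, ω ^ (m * q S T) = 0 := by
      intro S T hST
      set j : ℕ := Sᶜ.card with hj
      set k : ℕ := Tᶜ.card with hk
      have hjN : j ≤ N := by
        have := Finset.card_le_univ Sᶜ
        simpa using this
      have hkN : k ≤ N := by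
        have := Finset.card_le_univ Tᶜ
        simpa using this
      have hjk : ¬(j = 0 ∧ k = N) := by
        rintro ⟨hj0, hkNeq⟩
        apply hST
        constructor
        · have : Sᶜ = ∅ := Finset.card_eq_zero.mp hj0
          simpa using congrArg compl this
        · have : Tᶜ = Finset.univ := by
            apply Finset.eq_univ_of_card
            simpa using hkNeq
          simpa using congrArg compl this
      have hne1 : ω ^ (q S T) ≠ 1 := by
        intro h
        have hdvd : n ∣ q S T := (hprim.pow_eq_one_iff_dvd _).mp h
        obtain ⟨m0, hm0⟩ : ∃ m0, m0 + j = N + 1 + k := ⟨N + 1 + k - j, by omega⟩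
        have hqeq : q S T = n * j + m0 := by
          have h1 : q S T = (N + 1 + k) + 2 * N * j := by rw [hq]; ring
          rw [h1, ← hm0, hn]; ring
        rw [hqeq] at hdvd
        have hdvd2 : n ∣ m0 := (Nat.dvd_add_right (dvd_mul_right n j)).mp hdvd
        have hpos : 0 < m0 := by omega
        have := Nat.le_of_dvd hpos hdvd2
        omega
      have : ∑ m ∈ Finset.range n, ω ^ (m * q S T) = ∑ m ∈ Finset.range n, (ω ^ (q S T)) ^ m := by
        refine Finset.sum_congr rfl fun m _ => ?_
        rw [← pow_mul, mul_comm]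
      rw [this, geom_sum_eq hne1, ← pow_mul, mul_comm (q S T) n, pow_mul, hω1, one_pow]
      simp
    -- evaluate the double sum: only (univ, ∅) survives
    have huniv : ∑ m ∈ Finset.range n, ω ^ (m * q Finset.univ ∅) = (n : ℂ) := by
      have hqval : q Finset.univ (∅ : Finset (Fin N)) = n := by
        rw [hq]; simp [hn]; omega
      rw [hqval]
      have : ∀ m ∈ Finset.range n, ω ^ (m * n) = 1 := by
        intro m _
        rw [mul_comm, pow_mul, hω1, one_pow]
      rw [Finset.sum_congr rfl this]
      simp
    have hmain2 : (0 : ℂ) = (n : ℂ) * C Finset.univ ∅ := by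
      rw [main]
      rw [Finset.sum_eq_single Finset.univ]
      · rw [Finset.sum_eq_single (∅ : Finset (Fin N))]
        · rw [huniv]
        · intro T _ hT
          rw [hzsum _ _ (by tauto), zero_mul]
        · intro h; exact absurd (Finset.mem_univ _) h
      · intro S _ hS
        refine Finset.sum_eq_zero fun T _ => ?_
        rw [hzsum _ _ (by tauto), zero_mul]
      · intro h; exact absurd (Finset.mem_univ _) h
    have hu0 : uvec N ψ₀ ψ₁ Finset.univ = tpow d N ψ₀ := by
      funext x; simp [uvec, tpow]
    have hu1 : uvec N ψ₀ ψ₁ (∅ : Finset (Fin N)) = tpow d N ψ₁ := by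
      funext x; simp [uvec, tpow]
    have hCeq : C Finset.univ ∅ = quadF (tpow d N ψ₀) A (tpow d N ψ₁) := by
      simp only [hC]
      rw [hu0, hu1]
    have hnne : (n : ℂ) ≠ 0 := Nat.cast_ne_zero.mpr hn0
    rw [← hCeq]
    have := hmain2.symm
    exact (mul_eq_zero.mp this).resolve_left hnne
  refine ⟨key, ?_⟩
  have bilin : ∀ u, u ∈ Submodule.span ℂ (Set.range (tpow d N)) →
      ∀ v, v ∈ Submodule.span ℂ (Set.range (tpow d N)) → quadF u A v = 0 := by
    intro u hu
    induction hu using Submodule.span_induction with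
    | mem x hx =>
      obtain ⟨ψ₀, rfl⟩ := hx
      intro v hv
      induction hv using Submodule.span_induction with
      | mem y hy => obtain ⟨ψ₁, rfl⟩ := hy; exact key ψ₀ ψ₁
      | zero => simp [quadF]
      | add v w hv hw ihv ihw => rw [quadF_add_right, ihv, ihw, add_zero]
      | smul c v hv ih => rw [quadF_smul_right', ih, mul_zero]
    | zero => intro v hv; exact quadF_zero_left A v
    | add u w hu hw ihu ihw => intro v hv; rw [quadF_add_left, ihu v hv, ihw v hv, add_zero]
    | smul c u hu ih => intro v hv; rw [quadF_smul_left', ih v hv, mul_zero]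
  intro φ hφ
  exact bilin φ hφ φ hφ
end
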